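/- arXiv:1203.4377 — 2 statements merged into one kernel-verified Lean document; each statement's English description precedes it below -/
import Mathlib

section
/- Let a > 0, let h(t) = sqrt(2ε²(α²+1)t + 1) for fixed ε, α > 0, and let f : [0,∞) → ℝ be continuous with lim_{t→∞} h(t)·f(t) = 0. Then e^{-a h(t)} ∫₀ᵗ f(u) e^{a h(u)} du → 0 as t → ∞. -/
open Filter intervalIntegral

/-- With `h(t) = sqrt(2ε²(α²+1)t + 1)` (`ε, α > 0`), `a > 0` and `f` continuous on
`[0,∞)` with `h(t) f(t) → 0`, we have
`e^{-a h(t)} ∫₀ᵗ f(u) e^{a h(u)} du → 0` as `t → ∞`. -/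
theorem exp_weighted_integral_tendsto_zero (a ε α : ℝ) (ha : 0 < a) (hε : 0 < ε) (hα : 0 < α)
    (f : ℝ → ℝ) (hf : ContinuousOn f (Set.Ici 0))
    (hlim : Tendsto (fun t : ℝ => Real.sqrt (2 * ε ^ 2 * (α ^ 2 + 1) * t + 1) * f t)
      atTop (nhds 0)) :
    Tendsto (fun t : ℝ =>
        Real.exp (-a * Real.sqrt (2 * ε ^ 2 * (α ^ 2 + 1) * t + 1)) *
          ∫ u in (0:ℝ)..t, f u * Real.exp (a * Real.sqrt (2 * ε ^ 2 * (α ^ 2 + 1) * u + 1)))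
      atTop (nhds 0) := by
  have hc : (0:ℝ) < 2 * ε ^ 2 * (α ^ 2 + 1) := by positivity
  set c := 2 * ε ^ 2 * (α ^ 2 + 1) with hcdef
  set h : ℝ → ℝ := fun t => Real.sqrt (c * t + 1) with hhdef
  have hh : ∀ t : ℝ, Real.sqrt (c * t + 1) = h t := fun _ => rfl
  simp only [hh] at hlim ⊢
  have hcont : Continuous h := Real.continuous_sqrt.comp ((continuous_const.mul continuous_id).add continuous_const)
  have h1 : ∀ t, 0 ≤ t → 1 ≤ h t := by
    intro t ht
    rw [show (1:ℝ) = Real.sqrt 1 by simp]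
    exact Real.sqrt_le_sqrt (by nlinarith)
  have hpos : ∀ t, 0 ≤ t → 0 < h t := fun t ht => lt_of_lt_of_le one_pos (h1 t ht)
  have hderiv : ∀ t, 0 ≤ t → HasDerivAt h (c / (2 * h t)) t := by
    intro t ht
    have hx : c * t + 1 ≠ 0 := by positivity
    have := (Real.hasDerivAt_sqrt hx).comp t (((hasDerivAt_id t).const_mul c).add_const 1)
    refine this.congr_deriv ?_
    rw [hh]; ring
  set F : ℝ → ℝ := fun t => Real.exp (a * h t) with hFdef
  have hFpos : ∀ t, 0 < F t := fun t => Real.exp_pos _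
  have hFderiv : ∀ t, 0 ≤ t → HasDerivAt F (a * c / (2 * h t) * F t) t := by
    intro t ht
    have := ((hderiv t ht).const_mul a).exp
    convert this using 1
    ring
  set g : ℝ → ℝ := fun u => f u * F u with hgdef
  have hgcont : ContinuousOn g (Set.Ici 0) :=
    hf.mul ((Real.continuous_exp.comp (continuous_const.mul hcont)).continuousOn)
  have hgInt : ∀ s t : ℝ, 0 ≤ s → 0 ≤ t → IntervalIntegrable g MeasureTheory.volume s t := by
    intro s t hs ht
    apply (hgcont.mono ?_).intervalIntegrable
    intro x hx
    rcases Set.mem_uIcc.mp hx with ⟨h1, _⟩ | ⟨h1, _⟩ <;> exact le_trans (by assumption) h1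
  have hF'cont : ContinuousOn (fun u => a * c / (2 * h u) * F u) (Set.Ici 0) := by
    apply ContinuousOn.mul
    · apply ContinuousOn.div continuousOn_const (continuous_const.mul hcont).continuousOn
      intro x hx
      have := hpos x hx
      exact mul_ne_zero two_ne_zero (ne_of_gt this)
    · exact (Real.continuous_exp.comp (continuous_const.mul hcont)).continuousOn
  have hF'Int : ∀ s t : ℝ, 0 ≤ s → 0 ≤ t →
      IntervalIntegrable (fun u => a * c / (2 * h u) * F u) MeasureTheory.volume s t := by
    intro s t hs ht
    apply (hF'cont.mono ?_).intervalIntegrable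
    intro x hx
    rcases Set.mem_uIcc.mp hx with ⟨h1, _⟩ | ⟨h1, _⟩ <;> exact le_trans (by assumption) h1
  have hac : a * c ≠ 0 := by positivity
  have key : ∀ η T t : ℝ, 0 ≤ η → 0 ≤ T → T ≤ t →
      (∀ u, T ≤ u → |h u * f u| ≤ η) →
      |∫ u in T..t, g u| ≤ 2 * η / (a * c) * F t := by
    intro η T t hη hT hTt hb
    have ht0 : 0 ≤ t := le_trans hT hTt
    have step1 : |∫ u in T..t, g u| ≤ ∫ u in T..t, |g u| :=
      intervalIntegral.abs_integral_le_integral_abs hTt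
    have step2 : (∫ u in T..t, |g u|) ≤
        ∫ u in T..t, 2 * η / (a * c) * (a * c / (2 * h u) * F u) := by
      apply intervalIntegral.integral_mono_on hTt ((hgInt T t hT ht0).abs)
        ((hF'Int T t hT ht0).const_mul _)
      intro u hu
      have hu0 : 0 ≤ u := le_trans hT hu.1
      have hhu := hpos u hu0
      have hhu' : h u ≠ 0 := ne_of_gt hhu
      have hfb : |f u| ≤ η / h u := by
        rw [le_div_iff₀ hhu]
        have hbu := hb u hu.1
        rw [abs_mul, abs_of_pos hhu] at hbu
        linarith
      calc |g u| = |f u| * F u := by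
            rw [hgdef]; simp only [abs_mul, abs_of_pos (hFpos u)]
        _ ≤ (η / h u) * F u := mul_le_mul_of_nonneg_right hfb (le_of_lt (hFpos u))
        _ = 2 * η / (a * c) * (a * c / (2 * h u) * F u) := by field_simp
    have step3 : (∫ u in T..t, a * c / (2 * h u) * F u) = F t - F T := by
      apply intervalIntegral.integral_eq_sub_of_hasDerivAt
      · intro u hu
        rw [Set.uIcc_of_le hTt] at hu
        exact hFderiv u (le_trans hT hu.1)
      · exact hF'Int T t hT ht0
    have step4 : (∫ u in T..t, 2 * η / (a * c) * (a * c / (2 * h u) * F u))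
        = 2 * η / (a * c) * (F t - F T) := by
      rw [intervalIntegral.integral_const_mul, step3]
    have step5 : 2 * η / (a * c) * (F t - F T) ≤ 2 * η / (a * c) * F t := by
      apply mul_le_mul_of_nonneg_left _ (by positivity)
      linarith [hFpos T]
    calc |∫ u in T..t, g u| ≤ ∫ u in T..t, |g u| := step1
      _ ≤ _ := step2
      _ = 2 * η / (a * c) * (F t - F T) := step4
      _ ≤ 2 * η / (a * c) * F t := step5
  -- rewrite goal in terms of F and g
  have hF' : ∀ u : ℝ, Real.exp (a * h u) = F u := fun _ => rfl
  have hg' : ∀ u : ℝ, f u * F u = g u := fun _ => rfl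
  simp only [neg_mul, hF', hg']
  -- limit of exp(-(a h t))
  have hhtop : Tendsto h atTop atTop := by
    rw [tendsto_atTop]
    intro b
    filter_upwards [eventually_ge_atTop ((b ^ 2 + 1) / c)] with t ht
    have hbt : b ^ 2 ≤ c * t + 1 := by
      rw [div_le_iff₀ hc] at ht
      nlinarith
    have hs := Real.sqrt_le_sqrt hbt
    rw [Real.sqrt_sq_eq_abs] at hs
    exact le_trans (le_abs_self b) hs
  have hexp : Tendsto (fun t => Real.exp (-(a * h t))) atTop (nhds 0) :=
    Real.tendsto_exp_neg_atTop_nhds_zero.comp (Tendsto.const_mul_atTop ha hhtop)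
  rw [NormedAddCommGroup.tendsto_nhds_zero]
  intro δ hδ
  set η := δ * (a * c) / 8 with hηdef
  have hη : 0 < η := by positivity
  have hev : ∀ᶠ u in atTop, |h u * f u| ≤ η := by
    have h2 := Metric.tendsto_nhds.mp hlim η hη
    filter_upwards [h2] with u hu
    rw [Real.dist_eq, sub_zero] at hu
    exact le_of_lt hu
  obtain ⟨T₀, hT₀⟩ := eventually_atTop.mp hev
  set T := max T₀ 0 with hTdef
  have hT0 : 0 ≤ T := le_max_right _ _
  have hbT : ∀ u, T ≤ u → |h u * f u| ≤ η := fun u hu =>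
    hT₀ u (le_trans (le_max_left _ _) hu)
  set K := |∫ u in (0:ℝ)..T, g u| with hKdef
  have hK0 : 0 ≤ K := abs_nonneg _
  have hsmall : ∀ᶠ t in atTop, Real.exp (-(a * h t)) * K < δ / 2 := by
    have h2 := Metric.tendsto_nhds.mp hexp ((δ / 2) / (K + 1)) (by positivity)
    filter_upwards [h2] with t htd
    rw [Real.dist_eq, sub_zero, abs_of_pos (Real.exp_pos _)] at htd
    have : Real.exp (-(a * h t)) * K ≤ Real.exp (-(a * h t)) * (K + 1) := by
      apply mul_le_mul_of_nonneg_left (by linarith) (le_of_lt (Real.exp_pos _))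
    calc Real.exp (-(a * h t)) * K ≤ Real.exp (-(a * h t)) * (K + 1) := this
      _ < ((δ / 2) / (K + 1)) * (K + 1) := by
          apply mul_lt_mul_of_pos_right htd (by positivity)
      _ = δ / 2 := by field_simp
  filter_upwards [eventually_ge_atTop T, hsmall] with t ht hsm
  have ht0 : 0 ≤ t := le_trans hT0 ht
  have hsplit : (∫ u in (0:ℝ)..t, g u) = (∫ u in (0:ℝ)..T, g u) + ∫ u in T..t, g u :=
    (intervalIntegral.integral_add_adjacent_intervals (hgInt 0 T le_rfl hT0)
      (hgInt T t hT0 ht0)).symm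
  have hkey := key η T t (le_of_lt hη) hT0 ht hbT
  have hexpFt : Real.exp (-(a * h t)) * F t = 1 := by
    rw [hFdef]
    simp only
    rw [← Real.exp_add]
    simp
  have hept : 0 < Real.exp (-(a * h t)) := Real.exp_pos _
  rw [Real.norm_eq_abs, abs_mul, abs_of_pos hept, hsplit]
  calc Real.exp (-(a * h t)) * |(∫ u in (0:ℝ)..T, g u) + ∫ u in T..t, g u|
      ≤ Real.exp (-(a * h t)) * (K + 2 * η / (a * c) * F t) := by
        apply mul_le_mul_of_nonneg_left _ (le_of_lt hept)
        calc |(∫ u in (0:ℝ)..T, g u) + ∫ u in T..t, g u|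
            ≤ K + |∫ u in T..t, g u| := abs_add_le _ _
          _ ≤ K + 2 * η / (a * c) * F t := by linarith
    _ = Real.exp (-(a * h t)) * K + 2 * η / (a * c) * (Real.exp (-(a * h t)) * F t) := by
        ring
    _ = Real.exp (-(a * h t)) * K + 2 * η / (a * c) := by rw [hexpFt]; ring
    _ < δ / 2 + δ / 2 := by
        have : 2 * η / (a * c) = δ / 4 := by
          rw [hηdef]; field_simp; ring
        rw [this]; linarith
    _ = δ := by ring
end

section
/- For A(x) = α I - α x x* - L(x) with x ∈ ℝ³, the Itô–Stratonovich correction term Σ_{j=1}^3 (D_j A)(x) A(x)* e_j equals -2(α²+1)x when |x| = 1, where D_j denotes the partial derivative in the j-th coordinate of x and e_j the j-th canonical basis vector. -/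
open Matrix

/-- The cross-product matrix of `x ∈ ℝ³`. -/
def crossMat (x : Fin 3 → ℝ) : Matrix (Fin 3) (Fin 3) ℝ :=
  !![0, -x 2, x 1; x 2, 0, -x 0; -x 1, x 0, 0]

/-- The `j`-th canonical basis vector of `ℝ³`. -/
def e3 (j : Fin 3) : Fin 3 → ℝ := Pi.single j 1

/-- The `j`-th partial derivative of `x ↦ A(x) = α I - α x x* - L(x)`:
`D_j A (x) = -α (e_j x* + x e_j*) - L(e_j)`. -/
def DAmat (α : ℝ) (x : Fin 3 → ℝ) (j : Fin 3) : Matrix (Fin 3) (Fin 3) ℝ :=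
  -α • (vecMulVec (e3 j) x + vecMulVec x (e3 j)) - crossMat (e3 j)

set_option maxHeartbeats 1000000 in
/-- The Itô–Stratonovich correction term
`Σ_j (D_j A)(x) (α e_j - α x_j x - L(e_j) x)` equals `-2(α²+1) x` for unit `x`. -/
theorem strato_correction (α : ℝ) (x : Fin 3 → ℝ) (hx : x ⬝ᵥ x = 1) :
    (∑ j : Fin 3, (DAmat α x j).mulVec
        (α • e3 j - (α * x j) • x - (crossMat (e3 j)).mulVec x))
      = -(2 * (α ^ 2 + 1)) • x := by
  have h : x 0 * x 0 + x 1 * x 1 + x 2 * x 2 = 1 := by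
    simpa [dotProduct, Fin.sum_univ_three] using hx
  funext i
  fin_cases i <;>
    simp [DAmat, crossMat, e3, mulVec, dotProduct, vecMulVec, Fin.sum_univ_three,
      Pi.single_apply, Matrix.vecHead, Matrix.vecTail, Function.comp,
      Matrix.smul_apply, Pi.smul_apply, smul_eq_mul]
  · linear_combination 2 * α ^ 2 * x 0 * h
  · linear_combination 2 * α ^ 2 * x 1 * h
  · linear_combination 2 * α ^ 2 * x 2 * h
end
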